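/- For all positive integers s and t with t ≥ s, the weight function W satisfies s·t·C(s,t) < 3·W(s,t) and W(s,t) ≤ s·t·C(s,t); that is, s/3 < W(s,t)/(t·C(s,t)) ≤ s. -/

import Mathlib

/-- The function `C` of Füredi and Hajnal, defined for positive integers `s, t`:
`C(1,t) = 1`, `C(s,1) = 2` for `s > 1`, and `C(s,t) = C(s,t-1) * C(s-1, C(s,t-1))` for `s, t > 1`.
(The value at arguments equal to `0` is junk.) -/
def C : ℕ → ℕ → ℕ
  | 0, _ => 0
  | 1, _ => 1
  | _+2, 0 => 0
  | _+2, 1 => 2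
  | s+2, t+2 => C (s+2) (t+1) * C (s+1) (C (s+2) (t+1))
termination_by s t => (s, t)

/-- The weight `W(s,t) = |M(s,t)|` of the pattern-avoiding matrices of Füredi and Hajnal:
`W(1,t) = t`, `W(s,1) = 2` for `s > 1`, and
`W(s,t) = C(s,t) + C(s-1,C(s,t-1)) * W(s,t-1) + W(s-1,C(s,t-1))` for `s, t > 1`.
(The value at arguments equal to `0` is junk.) -/
def W : ℕ → ℕ → ℕ
  | 0, _ => 0
  | 1, t => t
  | _+2, 0 => 0
  | _+2, 1 => 2
  | s+2, t+2 =>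
      C (s+2) (t+2) + C (s+1) (C (s+2) (t+1)) * W (s+2) (t+1) + W (s+1) (C (s+2) (t+1))
termination_by s t => (s, t)

lemma C_one_t (t : ℕ) : C 1 t = 1 := by simp [C]

lemma C_s_one (s : ℕ) : C (s+2) 1 = 2 := by simp [C]

lemma C_rec (s t : ℕ) : C (s+2) (t+2) = C (s+2) (t+1) * C (s+1) (C (s+2) (t+1)) := by rw [C]

lemma W_one_t (t : ℕ) : W 1 t = t := by simp [W]

lemma W_s_one (s : ℕ) : W (s+2) 1 = 2 := by simp [W]

lemma W_rec (s t : ℕ) : W (s+2) (t+2) =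
    C (s+2) (t+2) + C (s+1) (C (s+2) (t+1)) * W (s+2) (t+1) + W (s+1) (C (s+2) (t+1)) := by
  rw [W]

lemma one_le_C : ∀ s t : ℕ, 1 ≤ s → 1 ≤ t → 1 ≤ C s t
  | 0, _, h, _ => absurd h (by omega)
  | 1, t, _, _ => by simp [C_one_t]
  | _+2, 0, _, h => absurd h (by omega)
  | s+2, 1, _, _ => by simp [C_s_one]
  | s+2, t+2, _, _ => by
      have h1 := one_le_C (s+2) (t+1) (by omega) (by omega)
      have h2 := one_le_C (s+1) (C (s+2) (t+1)) (by omega) h1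
      rw [C_rec]
      calc 1 = 1 * 1 := by ring
        _ ≤ C (s+2) (t+1) * C (s+1) (C (s+2) (t+1)) := Nat.mul_le_mul h1 h2
termination_by s t => (s, t)

lemma C_le_succ (s t : ℕ) (hs : 1 ≤ s) (ht : 1 ≤ t) : C s t ≤ C s (t+1) := by
  rcases s with _ | _ | s
  · omega
  · simp [C_one_t]
  · rcases t with _ | t
    · omega
    · rw [C_rec]
      have h1 := one_le_C (s+2) (t+1) (by omega) (by omega)
      have h2 := one_le_C (s+1) (C (s+2) (t+1)) (by omega) h1
      calc C (s+2) (t+1) = C (s+2) (t+1) * 1 := by ring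
        _ ≤ C (s+2) (t+1) * C (s+1) (C (s+2) (t+1)) := Nat.mul_le_mul_left _ h2

lemma C_mono (s t u : ℕ) (hs : 1 ≤ s) (ht : 1 ≤ t) (htu : t ≤ u) : C s t ≤ C s u := by
  induction u, htu using Nat.le_induction with
  | base => exact le_refl _
  | succ u hu ih => exact le_trans ih (C_le_succ s u hs (by omega))

lemma C_two (s : ℕ) : C (s+1) 2 = 2 ^ s := by
  induction s with
  | zero => simp [C_one_t]
  | succ s ih =>
      rw [C_rec, C_s_one, ih]
      ring

lemma self_le_C (s u : ℕ) (hs : 1 ≤ s) (hu : 2 ≤ u) : s ≤ C s u := by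
  rcases s with _ | s
  · omega
  · have h2p : s + 1 ≤ 2 ^ s := Nat.lt_two_pow_self (n := s)
    calc s + 1 ≤ 2 ^ s := h2p
      _ = C (s+1) 2 := (C_two s).symm
      _ ≤ C (s+1) u := C_mono (s+1) 2 u (by omega) (by omega) hu

lemma W_le : ∀ s t : ℕ, 1 ≤ s → 1 ≤ t → W s t ≤ s * (t * C s t)
  | 0, _, h, _ => absurd h (by omega)
  | 1, t, _, _ => by simp [C_one_t, W_one_t]
  | _+2, 0, _, h => absurd h (by omega)
  | s+2, 1, _, _ => by simp [C_s_one, W_s_one]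
  | s+2, t+2, _, _ => by
      have hT : 1 ≤ C (s+2) (t+1) := one_le_C (s+2) (t+1) (by omega) (by omega)
      have hc : 1 ≤ C (s+1) (C (s+2) (t+1)) := one_le_C (s+1) _ (by omega) hT
      have ih1 := W_le (s+2) (t+1) (by omega) (by omega)
      have ih2 := W_le (s+1) (C (s+2) (t+1)) (by omega) hT
      rw [W_rec, C_rec]
      set T := C (s+2) (t+1) with hTdef
      set c := C (s+1) T with hcdef
      set W1 := W (s+2) (t+1) with hW1def
      set W2 := W (s+1) T with hW2def
      -- ih1 : W1 ≤ (s+2) * ((t+1) * T), ih2 : W2 ≤ (s+1) * (T * c)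
      calc T * c + c * W1 + W2
          ≤ T * c + c * ((s+2) * ((t+1) * T)) + (s+1) * (T * c) := by
            gcongr
        _ = (s+2) * ((t+2) * (T * c)) := by ring
termination_by s t => (s, t)

lemma key : ∀ s t : ℕ, 1 ≤ s → 2 ≤ t → ((s+2) * (t-2) + 6) * C s t ≤ 3 * W s t
  | 0, _, h, _ => absurd h (by omega)
  | 1, t, _, ht => by
      simp [C_one_t, W_one_t]
      omega
  | _+2, 0, _, h => absurd h (by omega)
  | _+2, 1, _, h => absurd h (by omega)
  | s+2, 2, _, _ => by
      rw [W_rec, C_rec, C_s_one, W_s_one]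
      omega
  | s+2, t+3, _, _ => by
      have hT1 : 1 ≤ C (s+2) (t+2) := one_le_C (s+2) (t+2) (by omega) (by omega)
      have hT : s+2 ≤ C (s+2) (t+2) := self_le_C (s+2) (t+2) (by omega) (by omega)
      have hc : 1 ≤ C (s+1) (C (s+2) (t+2)) := one_le_C (s+1) _ (by omega) hT1
      have ih1 := key (s+2) (t+2) (by omega) (by omega)
      have ih2 := key (s+1) (C (s+2) (t+2)) (by omega) (by omega)
      rw [show t+3 = (t+1)+2 from rfl, W_rec, C_rec]
      set T := C (s+2) (t+2) with hTdef
      set c := C (s+1) T with hcdef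
      set W1 := W (s+2) (t+2) with hW1def
      set W2 := W (s+1) T with hW2def
      -- ih1 : ((s+4)*t + 6) * T ≤ 3 * W1  (since (t+2)-2 = t)
      -- ih2 : ((s+3)*(T-2) + 6) * c ≤ 3 * W2
      have e1 : (t+2) - 2 = t := by omega
      rw [e1] at ih1
      obtain ⟨u, hu⟩ : ∃ u, T = u + 2 := ⟨T - 2, by omega⟩
      have hsu : s ≤ u := by omega
      rw [hu] at ih1 ih2 ⊢
      have e2 : (u+2) - 2 = u := by omega
      rw [e2] at ih2
      have e3 : (t+1+2) - 2 = t + 1 := by omega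
      rw [e3]
      -- goal : ((s+2+2)*(t+1)+6) * ((u+2)*c) ≤ 3 * ((u+2)*c + c*W1 + W2)
      have h1 : (((s+2)+2)*t + 6) * (u+2) * c ≤ 3 * W1 * c :=
        Nat.mul_le_mul_right c ih1
      nlinarith [Nat.mul_le_mul_right c (show ((s+2)+2)*(u+2) ≤ 3*(u+2) + (((s+1)+2)*u + 6) by nlinarith)]
termination_by s t => (s, t)

/-- Lemma (weight): for all positive integers `s` and `t` with `t ≥ s`,
`s/3 < W(s,t)/(t * C(s,t)) ≤ s`, i.e. `s * t * C(s,t) < 3 * W(s,t)` and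
`W(s,t) ≤ s * t * C(s,t)`. -/
theorem weight_bounds (s t : ℕ) (hs : 0 < s) (hts : s ≤ t) :
    s * (t * C s t) < 3 * W s t ∧ W s t ≤ s * (t * C s t) := by
  refine ⟨?_, W_le s t hs (le_trans hs hts)⟩
  rcases s with _ | _ | s
  · omega
  · simp [C_one_t, W_one_t]
    omega
  · have h := key (s+2) t (by omega) (by omega)
    have hC : 1 ≤ C (s+2) t := one_le_C (s+2) t (by omega) (by omega)
    obtain ⟨d, hd⟩ : ∃ d, t = d + 2 := ⟨t - 2, by omega⟩
    have hsd : s ≤ d := by omega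
    rw [hd] at h ⊢
    have e : (d+2) - 2 = d := by omega
    rw [e] at h
    have hlt : (s+2) * ((d+2) * C (s+2) (d+2)) < ((s+2+2)*d + 6) * C (s+2) (d+2) := by
      have hC' : 1 ≤ C (s+2) (d+2) := by rw [hd] at hC; exact hC
      have : (s+2) * (d+2) + 1 ≤ (s+2+2)*d + 6 := by nlinarith
      calc (s+2) * ((d+2) * C (s+2) (d+2)) = ((s+2) * (d+2)) * C (s+2) (d+2) := by ring
        _ < ((s+2+2)*d + 6) * C (s+2) (d+2) := by
            exact Nat.mul_lt_mul_of_lt_of_le (by omega) (le_refl _) (by omega)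
    exact lt_of_lt_of_le hlt h
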